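/- Let G be a group of permutations of a set A and let (F,T) be an extended set type for G acting on A which has the cover property. Then for every finite subset B of A with F not contained in B, the set T \ ⋃{g(T) : g ∈ G, g(F) ⊆ B} is infinite. -/

import Mathlib

/-- `(F, T)` is an extended set type for the set `H` of permutations of `A` acting on
`A`: `F` is finite, `T` is nonempty, disjoint from `F`, and is a union of equivalence
classes of the relation `a ~ b` iff some `h ∈ H` with `h(F) = F` (setwise) maps `a`
to `b` (each such class being disjoint from `F`). -/
def IsExtendedSetType {A : Type*} (H : Set (Equiv.Perm A)) (F T : Set A) : Prop :=
  F.Finite ∧ T.Nonempty ∧ Disjoint F T ∧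
    ∀ a ∈ T, ∀ h ∈ H, (h : Equiv.Perm A) '' F = F → h a ∈ T

/-- The extended set type `(F, T)` has the cover property: for every finite set `H'`
of elements `h` of `H` with `h(F) ≠ F`, the set `T \ ⋃_{h ∈ H'} h(T)` is infinite. -/
def HasCoverProperty {A : Type*} (H : Set (Equiv.Perm A)) (F T : Set A) : Prop :=
  ∀ H' : Finset (Equiv.Perm A),
    (∀ h ∈ H', h ∈ H ∧ (h : Equiv.Perm A) '' F ≠ F) →
    (T \ ⋃ h ∈ H', (h : Equiv.Perm A) '' T).Infinite

/-- if `(F,T)` is an extended set type for `G` acting on `A` with the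
cover property, then for every finite `B ⊆ A` not containing `F`, the set
`T \ ⋃ {g(T) : g ∈ G, g(F) ⊆ B}` is infinite. -/
theorem extended_set_type_cover
    {A : Type*} (G : Subgroup (Equiv.Perm A)) (F T : Set A)
    (hext : IsExtendedSetType (G : Set (Equiv.Perm A)) F T)
    (hcov : HasCoverProperty (G : Set (Equiv.Perm A)) F T)
    (B : Set A) (hB : B.Finite) (hFB : ¬ F ⊆ B) :
    (T \ ⋃ g ∈ {g : Equiv.Perm A | g ∈ G ∧ (g : Equiv.Perm A) '' F ⊆ B},
      (g : Equiv.Perm A) '' T).Infinite := by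
  obtain ⟨hF, hTne, hdisj, hclass⟩ := hext
  set S : Set (Equiv.Perm A) := {g : Equiv.Perm A | g ∈ G ∧ (g : Equiv.Perm A) '' F ⊆ B}
    with hS
  have hCfin : ({C : Set A | ∃ g ∈ S, (g : Equiv.Perm A) '' F = C}).Finite := by
    apply (hB.finite_subsets).subset
    rintro C ⟨g, hg, rfl⟩
    exact hg.2
  have hRfin : ({h : Equiv.Perm A | ∃ C, ∃ hC : C ∈ {C : Set A | ∃ g ∈ S,
      (g : Equiv.Perm A) '' F = C}, hC.choose = h}).Finite :=
    hCfin.dependent_image _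
  obtain ⟨R, hR⟩ := hRfin.exists_finset_coe
  have hmem : ∀ h ∈ R, h ∈ (G : Set (Equiv.Perm A)) ∧ (h : Equiv.Perm A) '' F ≠ F := by
    intro h hh
    have : h ∈ (↑R : Set (Equiv.Perm A)) := hh
    rw [hR] at this
    obtain ⟨C, hC, rfl⟩ := this
    obtain ⟨hgS, hgF⟩ := hC.choose_spec
    refine ⟨hgS.1, fun heq => hFB ?_⟩
    rw [← heq]
    exact hgS.2
  have key := hcov R hmem
  apply key.mono
  intro x hx
  refine ⟨hx.1, fun hxU => hx.2 ?_⟩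
  simp only [Set.mem_iUnion] at hxU ⊢
  obtain ⟨g, hg, a, ha, rfl⟩ := hxU
  have hC : (g : Equiv.Perm A) '' F ∈ {C : Set A | ∃ g ∈ S, (g : Equiv.Perm A) '' F = C} :=
    ⟨g, hg, rfl⟩
  set r := hC.choose with hr
  obtain ⟨hrS, hrF⟩ := hC.choose_spec
  have hrR : r ∈ R := by
    have : r ∈ (↑R : Set (Equiv.Perm A)) := by
      rw [hR]; exact ⟨_, hC, rfl⟩
    exact this
  refine ⟨r, hrR, ?_⟩
  have hhG : r⁻¹ * g ∈ G := mul_mem (inv_mem hrS.1) hg.1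
  have hhF : ((r⁻¹ * g : Equiv.Perm A)) '' F = F := by
    have : ((r⁻¹ * g : Equiv.Perm A)) '' F = (r⁻¹ : Equiv.Perm A) '' ((g : Equiv.Perm A) '' F) := by
      rw [← Set.image_comp]; rfl
    rw [this, ← hrF, ← Set.image_comp]
    simp [hr]
  have hmem2 : (r⁻¹ * g : Equiv.Perm A) a ∈ T := hclass a ha _ hhG hhF
  exact ⟨_, hmem2, by simp [Equiv.Perm.mul_apply]⟩
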